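/- Let v₁, …, v_n be positive real losses, and let the index set {1, …, n} be partitioned into an inlier set I and an outlier set O such that v_i ≤ v_j for every i ∈ I and j ∈ O. Let t ∈ (0, 1] and define w by w_i = t·v_i for i ∈ I and w_j = v_j for j ∈ O. Then H(w) ≤ H(v), where for a positive vector x with normalization u_k = x_k / Σ_m x_m, the loss entropy is H(x) = −Σ_k u_k log u_k. -/

import Mathlib

lemma lossEntropy_aux_formula {n : ℕ} (x : Fin n → ℝ) (hx : ∀ k, 0 < x k)
    (hS : 0 < ∑ m, x m) :
    -∑ k, (x k / ∑ m, x m) * Real.log (x k / ∑ m, x m)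
      = Real.log (∑ m, x m) - (∑ k, x k * Real.log (x k)) / (∑ m, x m) := by
  set S := ∑ m, x m with hSdef
  have h : ∀ k : Fin n, (x k / S) * Real.log (x k / S)
      = (x k * Real.log (x k)) / S - (x k / S) * Real.log S := by
    intro k
    rw [Real.log_div (hx k).ne' hS.ne']
    ring
  rw [Finset.sum_congr rfl (fun k _ => h k), Finset.sum_sub_distrib, ← Finset.sum_div,
    ← Finset.sum_mul, ← Finset.sum_div, ← hSdef, div_self hS.ne', one_mul]
  ring

lemma lossEntropy_aux_hasDeriv (A B C D s : ℝ) (hs : 0 < s) (hden : 0 < s * A + B) :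
    HasDerivAt (fun s : ℝ => Real.log (s * A + B) - (s * C + s * A * Real.log s + D) / (s * A + B))
      ((A * D - B * C - A * B * Real.log s) / (s * A + B) ^ 2) s := by
  have hden' : HasDerivAt (fun s : ℝ => s * A + B) A s := by
    simpa using ((hasDerivAt_id s).mul_const A).add_const B
  have hlog : HasDerivAt (fun s : ℝ => Real.log (s * A + B)) (A / (s * A + B)) s :=
    hden'.log hden.ne'
  have hnum : HasDerivAt (fun s : ℝ => s * C + s * A * Real.log s + D)
      (C + (A * Real.log s + s * A * s⁻¹)) s := by
    have h1 : HasDerivAt (fun s : ℝ => s * C) C s := by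
      simpa using (hasDerivAt_id s).mul_const C
    have h2 : HasDerivAt (fun s : ℝ => s * A * Real.log s)
        (A * Real.log s + s * A * s⁻¹) s := by
      simpa using (((hasDerivAt_id s).mul_const A).fun_mul (Real.hasDerivAt_log hs.ne'))
    simpa using (h1.add h2).add_const D
  have := hlog.fun_sub (hnum.fun_div hden' hden.ne')
  convert this using 1
  · rfl
  · rfl
  field_simp
  ring

/-- The loss entropy (Eqs. (10)–(11)) of a vector of losses `x`:
`H(x) = -Σ_k u_k log u_k` where `u_k = x_k / Σ_m x_m`. -/
noncomputable def lossEntropy {n : ℕ} (x : Fin n → ℝ) : ℝ :=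
  -∑ k, (x k / ∑ m, x m) * Real.log (x k / ∑ m, x m)

/-- Deterministic form of Theorem 1: if every inlier loss is at most every outlier
loss (inlier priority) and all inlier losses are shrunk by a common factor
`t ∈ (0, 1]`, then the loss entropy does not increase. -/
theorem lossEntropy_le_of_inlier_shrink {n : ℕ} (v : Fin n → ℝ) (hv : ∀ k, 0 < v k)
    (I : Finset (Fin n))
    (hprio : ∀ i ∈ I, ∀ j ∈ Iᶜ, v i ≤ v j)
    (t : ℝ) (ht0 : 0 < t) (ht1 : t ≤ 1) :
    lossEntropy (fun k => if k ∈ I then t * v k else v k) ≤ lossEntropy v := by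
  rcases Nat.eq_zero_or_pos n with hn | hn
  · subst hn
    simp [lossEntropy]
  -- Notation
  set A := ∑ i ∈ I, v i with hAdef
  set B := ∑ j ∈ Iᶜ, v j with hBdef
  set C := ∑ i ∈ I, v i * Real.log (v i) with hCdef
  set D := ∑ j ∈ Iᶜ, v j * Real.log (v j) with hDdef
  have hA : 0 ≤ A := Finset.sum_nonneg fun i _ => (hv i).le
  have hB : 0 ≤ B := Finset.sum_nonneg fun j _ => (hv j).le
  have hsumv : ∑ m, v m = A + B := (Finset.sum_add_sum_compl I v).symm
  have hS : 0 < ∑ m, v m :=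
    Finset.sum_pos (fun k _ => hv k) (Finset.univ_nonempty_iff.2 ⟨⟨0, hn⟩⟩)
  have hAB : 0 < A + B := hsumv ▸ hS
  have hden : ∀ s : ℝ, 0 < s → 0 < s * A + B := by
    intro s hs
    rcases hB.lt_or_eq with hB0 | hB0
    · have : 0 ≤ s * A := mul_nonneg hs.le hA
      linarith
    · have hA0 : 0 < A := by linarith
      have : 0 < s * A := mul_pos hs hA0
      linarith
  -- Chebyshev-type inequality from inlier priority
  have hCheb : B * C ≤ A * D := by
    rw [hAdef, hBdef, hCdef, hDdef, Finset.sum_mul_sum, Finset.sum_mul_sum, Finset.sum_comm]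
    apply Finset.sum_le_sum
    intro i hi
    apply Finset.sum_le_sum
    intro j hj
    have hlog : Real.log (v i) ≤ Real.log (v j) :=
      Real.log_le_log (hv i) (hprio i hi j hj)
    nlinarith [mul_nonneg (hv i).le (hv j).le]
  -- The entropy as a function of the shrink factor
  set f : ℝ → ℝ :=
    fun s => Real.log (s * A + B) - (s * C + s * A * Real.log s + D) / (s * A + B) with hfdef
  have hderiv : ∀ s : ℝ, 0 < s →
      HasDerivAt f ((A * D - B * C - A * B * Real.log s) / (s * A + B) ^ 2) s :=
    fun s hs => lossEntropy_aux_hasDeriv A B C D s hs (hden s hs)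
  have hmono : MonotoneOn f (Set.Icc t 1) := by
    apply monotoneOn_of_deriv_nonneg (convex_Icc t 1)
    · exact fun s hs => (hderiv s (lt_of_lt_of_le ht0 hs.1)).continuousAt.continuousWithinAt
    · intro s hs
      rw [interior_Icc] at hs
      exact (hderiv s (ht0.trans hs.1)).differentiableAt.differentiableWithinAt
    · intro s hs
      rw [interior_Icc] at hs
      have hs0 : 0 < s := ht0.trans hs.1
      rw [(hderiv s hs0).deriv]
      apply div_nonneg _ (sq_nonneg _)
      have hlogs : Real.log s ≤ 0 := Real.log_nonpos hs0.le hs.2.le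
      have : A * B * Real.log s ≤ 0 :=
        mul_nonpos_of_nonneg_of_nonpos (mul_nonneg hA hB) hlogs
      linarith
  have hft : f t ≤ f 1 := hmono ⟨le_refl t, ht1⟩ ⟨ht1, le_refl 1⟩ ht1
  -- Identify lossEntropy v with f 1
  have hv1 : lossEntropy v = f 1 := by
    rw [lossEntropy, lossEntropy_aux_formula v hv hS, hfdef]
    have hsumlog : ∑ k, v k * Real.log (v k) = C + D :=
      (Finset.sum_add_sum_compl I _).symm
    rw [hsumv, hsumlog]
    norm_num
  -- Identify lossEntropy w with f t
  set w : Fin n → ℝ := fun k => if k ∈ I then t * v k else v k with hwdef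
  have hw : ∀ k, 0 < w k := by
    intro k
    rw [hwdef]
    by_cases h : k ∈ I
    · simpa [h] using mul_pos ht0 (hv k)
    · simpa [h] using hv k
  have hsumw : ∑ m, w m = t * A + B := by
    rw [← Finset.sum_add_sum_compl I w]
    have e1 : ∑ i ∈ I, w i = ∑ i ∈ I, t * v i :=
      Finset.sum_congr rfl fun i hi => by simp [hwdef, hi]
    have e2 : ∑ j ∈ Iᶜ, w j = ∑ j ∈ Iᶜ, v j :=
      Finset.sum_congr rfl fun j hj => by simp [hwdef, Finset.mem_compl.1 hj]
    rw [e1, e2, hAdef, hBdef, Finset.mul_sum]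
  have hSw : 0 < ∑ m, w m := by rw [hsumw]; exact hden t ht0
  have hvt : lossEntropy w = f t := by
    rw [lossEntropy, lossEntropy_aux_formula w hw hSw, hfdef, hsumw]
    congr 2
    rw [← Finset.sum_add_sum_compl I (fun k => w k * Real.log (w k))]
    have h1 : ∑ i ∈ I, w i * Real.log (w i) = t * C + t * A * Real.log t := by
      have : ∀ i ∈ I, w i * Real.log (w i)
          = t * (v i * Real.log (v i)) + Real.log t * (t * v i) := by
        intro i hi
        rw [hwdef]
        simp only [hi, if_true]
        rw [Real.log_mul ht0.ne' (hv i).ne']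
        ring
      rw [Finset.sum_congr rfl this, Finset.sum_add_distrib, ← Finset.mul_sum, ← Finset.mul_sum,
        ← Finset.mul_sum, ← hCdef, ← hAdef]
      ring
    have h2 : ∑ j ∈ Iᶜ, w j * Real.log (w j) = D := by
      rw [hDdef]
      exact Finset.sum_congr rfl fun j hj => by
        simp [hwdef, (Finset.mem_compl.1 hj)]
    rw [h1, h2]
  rw [hvt, hv1]
  exact hft
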